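/- With the setup of Theorem 1, the absolute value of the discriminant of F(x) = F₀(x) + q·m·p^d satisfies |Δ(F)| = q^q · m^{q−1} · |∏_{i=1}^{q₀−1}(q·p^d + C_i) · ∏_{j=1}^{q₁−1}(q·p^d + D_j)|, where C_i = F₀(−i·q₂·m·(q−1)!)/m and D_j = F₀(−j·m·(q−1)!)/m. -/

import Mathlib

open Polynomial

/-- `a(x) = ∏_{i=1}^{q₀-1} (x + i·q₂·m·(q-1)!)`. -/
noncomputable def aPoly (q₀ q₂ q : ℕ) (m : ℤ) : Polynomial ℤ :=
  ∏ i ∈ Finset.Icc 1 (q₀ - 1), (X + C ((i : ℤ) * q₂ * m * (Nat.factorial (q - 1) : ℤ)))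

/-- `b(x) = ∏_{j=1}^{q₁-1} (x + j·m·(q-1)!)`. -/
noncomputable def bPoly (q₁ q : ℕ) (m : ℤ) : Polynomial ℤ :=
  ∏ j ∈ Finset.Icc 1 (q₁ - 1), (X + C ((j : ℤ) * m * (Nat.factorial (q - 1) : ℤ)))

/-- `G(x) = q · a(x) · b(x)`. -/
noncomputable def GPoly (q₀ q₁ q₂ q : ℕ) (m : ℤ) : Polynomial ℤ :=
  C (q : ℤ) * aPoly q₀ q₂ q m * bPoly q₁ q m

/-- `F₀(x) = ∫₀ˣ G(t) dt`, as a polynomial with rational coefficients. -/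
noncomputable def F0 (q₀ q₁ q₂ q : ℕ) (m : ℤ) : Polynomial ℚ :=
  ∑ k ∈ Finset.range ((GPoly q₀ q₁ q₂ q m).natDegree + 1),
    C (((GPoly q₀ q₁ q₂ q m).coeff k : ℚ) / (k + 1)) * X ^ (k + 1)

/-- The Sylvester matrix of two integer polynomials. -/
noncomputable def sylvester (f g : Polynomial ℤ) :
    Matrix (Fin (g.natDegree + f.natDegree)) (Fin (g.natDegree + f.natDegree)) ℤ :=
  fun i j =>
    if (i : ℕ) < g.natDegree then
      if (i : ℕ) ≤ (j : ℕ) ∧ (j : ℕ) ≤ (i : ℕ) + f.natDegree then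
        f.coeff (f.natDegree - ((j : ℕ) - (i : ℕ)))
      else 0
    else
      if (i : ℕ) - g.natDegree ≤ (j : ℕ) ∧ (j : ℕ) ≤ (i : ℕ) then
        g.coeff (g.natDegree - ((j : ℕ) - ((i : ℕ) - g.natDegree)))
      else 0

/-- The resultant of two integer polynomials. -/
noncomputable def resultant (f g : Polynomial ℤ) : ℤ := (_root_.sylvester f g).det

/-- The discriminant of a monic integer polynomial. -/
noncomputable def discMonic (f : Polynomial ℤ) : ℤ :=
  (-1) ^ (f.natDegree * (f.natDegree - 1) / 2) * _root_.resultant f f.derivative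

lemma row_sum (p : Polynomial ℤ) (i N : ℕ) (hiN : i + p.natDegree < N) (x : ℤ) :
    ∑ k ∈ Finset.range N,
      (if i ≤ k ∧ k ≤ i + p.natDegree then p.coeff (p.natDegree - (k - i)) else 0)
        * x ^ (N - 1 - k)
      = x ^ (N - 1 - i - p.natDegree) * p.eval x := by
  rw [Polynomial.eval_eq_sum_range, Finset.mul_sum]
  have hsub : Finset.Icc i (i + p.natDegree) ⊆ Finset.range N := by
    intro k hk; simp only [Finset.mem_Icc, Finset.mem_range] at hk ⊢; omega
  rw [← Finset.sum_subset hsub (by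
    intro k _ hk2
    simp only [Finset.mem_Icc] at hk2
    rw [if_neg (by omega), zero_mul])]
  refine Finset.sum_nbij' (fun k => i + p.natDegree - k) (fun t => i + p.natDegree - t)
    ?_ ?_ ?_ ?_ ?_
  · intro k hk; simp only [Finset.mem_Icc] at hk; simp only [Finset.mem_range]; omega
  · intro t ht; simp only [Finset.mem_range] at ht; simp only [Finset.mem_Icc]; omega
  · intro k hk; simp only [Finset.mem_Icc] at hk
    show i + p.natDegree - (i + p.natDegree - k) = k; omega
  · intro t ht; simp only [Finset.mem_range] at ht
    show i + p.natDegree - (i + p.natDegree - t) = t; omega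
  · intro k hk
    simp only [Finset.mem_Icc] at hk
    rw [if_pos ⟨hk.1, hk.2⟩]
    show _ = x ^ (N - 1 - i - p.natDegree) * (p.coeff (i + p.natDegree - k) * x ^ (i + p.natDegree - k))
    have h1 : p.natDegree - (k - i) = i + p.natDegree - k := by omega
    have h2 : N - 1 - k = (N - 1 - i - p.natDegree) + (i + p.natDegree - k) := by omega
    rw [h1, h2, pow_add]
    ring

open Matrix in
lemma key_resultant (f g : Polynomial ℤ) (m : ℕ)
    (hgd : g.natDegree = m) (hfd : f.natDegree = m + 1)
    (β : Fin m → ℤ) (hinj : Function.Injective β)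
    (hroot : ∀ j, g.eval (β j) = 0) :
    _root_.resultant f g * (∏ j, β j) ^ (m + 1) =
      (∏ j, f.eval (β j)) * g.coeff 0 ^ (m + 1) := by
  have hNN : m + (m + 1) = g.natDegree + f.natDegree := by omega
  set ec : Fin (m + (m + 1)) ≃ Fin (g.natDegree + f.natDegree) := finCongr hNN with hec
  set S : Matrix (Fin (m + (m + 1))) (Fin (m + (m + 1))) ℤ :=
    (_root_.sylvester f g).submatrix ec ec with hS
  have hres : _root_.resultant f g = S.det := (Matrix.det_submatrix_equiv_self ec (_root_.sylvester f g)).symm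
  have hSapp : ∀ i j : Fin (m + (m + 1)), S i j =
      if (i : ℕ) < m then
        (if (i : ℕ) ≤ (j : ℕ) ∧ (j : ℕ) ≤ (i : ℕ) + (m + 1) then
          f.coeff ((m + 1) - ((j : ℕ) - (i : ℕ))) else 0)
      else
        (if (i : ℕ) - m ≤ (j : ℕ) ∧ (j : ℕ) ≤ (i : ℕ) then
          g.coeff (m - ((j : ℕ) - ((i : ℕ) - m))) else 0) := by
    intro i j
    simp only [hS, Matrix.submatrix_apply, _root_.sylvester, hec, finCongr_apply, Fin.coe_cast, hgd, hfd]
  set T : Matrix (Fin (m + (m + 1))) (Fin (m + (m + 1))) ℤ := fun i j =>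
    if h : (j : ℕ) < m then β ⟨j, h⟩ ^ (m + (m + 1) - 1 - (i : ℕ)) else if i = j then 1 else 0
    with hT
  set W : Matrix (Fin m) (Fin m) ℤ := fun i j => β j ^ (m - 1 - (i : ℕ)) with hW
  set e : Fin m ⊕ Fin (m + 1) ≃ Fin (m + (m + 1)) := finSumFinEquiv with he
  have hvl : ∀ i : Fin m, ((e (Sum.inl i)) : ℕ) = (i : ℕ) := by intro i; simp [he]
  have hvr : ∀ i : Fin (m + 1), ((e (Sum.inr i)) : ℕ) = m + (i : ℕ) := by intro i; simp [he]
  -- row sums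
  have hrowf : ∀ (i : Fin m) (x : ℤ),
      (∑ k : Fin (m + (m + 1)), S (e (Sum.inl i)) k * x ^ (m + (m + 1) - 1 - (k : ℕ)))
        = x ^ (m - 1 - (i : ℕ)) * f.eval x := by
    intro i x
    have step : (∑ k : Fin (m + (m + 1)), S (e (Sum.inl i)) k * x ^ (m + (m + 1) - 1 - (k : ℕ)))
        = ∑ k ∈ Finset.range (m + (m + 1)),
          (fun k : ℕ => (if (i : ℕ) ≤ k ∧ k ≤ (i : ℕ) + f.natDegree then
            f.coeff (f.natDegree - (k - (i : ℕ))) else 0) * x ^ (m + (m + 1) - 1 - k)) k := by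
      rw [← Fin.sum_univ_eq_sum_range]
      refine Finset.sum_congr rfl (fun k _ => ?_)
      rw [hSapp, if_pos (by rw [hvl]; omega), hvl, hfd]
    rw [step, row_sum f (i : ℕ) (m + (m + 1)) (by omega) x]
    congr 2
    rw [hfd]
    omega
  have hrowg : ∀ (i : Fin (m + 1)) (x : ℤ),
      (∑ k : Fin (m + (m + 1)), S (e (Sum.inr i)) k * x ^ (m + (m + 1) - 1 - (k : ℕ)))
        = x ^ (m + 1 - 1 - (i : ℕ)) * g.eval x := by
    intro i x
    have step : (∑ k : Fin (m + (m + 1)), S (e (Sum.inr i)) k * x ^ (m + (m + 1) - 1 - (k : ℕ)))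
        = ∑ k ∈ Finset.range (m + (m + 1)),
          (fun k : ℕ => (if (i : ℕ) ≤ k ∧ k ≤ (i : ℕ) + g.natDegree then
            g.coeff (g.natDegree - (k - (i : ℕ))) else 0) * x ^ (m + (m + 1) - 1 - k)) k := by
      rw [← Fin.sum_univ_eq_sum_range]
      refine Finset.sum_congr rfl (fun k _ => ?_)
      rw [hSapp, if_neg (by rw [hvr]; omega), hvr, hgd]
      have h1 : m + (i : ℕ) - m = (i : ℕ) := by omega
      rw [h1]
      by_cases hk : (i : ℕ) ≤ (k : ℕ) ∧ (k : ℕ) ≤ (i : ℕ) + m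
      · rw [if_pos ⟨hk.1, by omega⟩, if_pos hk]
      · rw [if_neg (by omega), if_neg hk]
    rw [step, row_sum g (i : ℕ) (m + (m + 1)) (by omega) x]
    congr 2
    rw [hgd]
    omega
  -- blocks of S*T
  set A : Matrix (Fin m) (Fin m) ℤ := fun i j => W i j * f.eval (β j) with hA
  set Bm : Matrix (Fin m) (Fin (m + 1)) ℤ := fun i j => S (e (Sum.inl i)) (e (Sum.inr j)) with hBm
  set Dm : Matrix (Fin (m + 1)) (Fin (m + 1)) ℤ := fun i j => S (e (Sum.inr i)) (e (Sum.inr j))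
    with hDm
  have hTcol : ∀ (i : Fin (m + (m + 1))) (j : Fin (m + 1)), T i (e (Sum.inr j)) =
      if i = e (Sum.inr j) then 1 else 0 := by
    intro i j
    rw [hT]
    simp only
    rw [dif_neg (by rw [hvr]; omega)]
  have hScol : ∀ (i : Fin (m + (m + 1))) (j : Fin (m + 1)), (S * T) i (e (Sum.inr j)) =
      S i (e (Sum.inr j)) := by
    intro i j
    rw [Matrix.mul_apply]
    rw [Finset.sum_congr rfl (fun k _ => by rw [hTcol k j])]
    simp
  have hTcolL : ∀ (i : Fin (m + (m + 1))) (j : Fin m), T i (e (Sum.inl j)) =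
      β j ^ (m + (m + 1) - 1 - (i : ℕ)) := by
    intro i j
    rw [hT]
    simp only
    rw [dif_pos (by rw [hvl]; omega : ((e (Sum.inl j)) : ℕ) < m)]
    exact congrArg (· ^ (m + (m + 1) - 1 - (i : ℕ))) (congrArg β (Fin.ext (hvl j)))
  have hST : (S * T).submatrix e e = Matrix.fromBlocks A Bm 0 Dm := by
    ext ij kl
    cases ij with
    | inl i =>
      cases kl with
      | inl j =>
        simp only [Matrix.submatrix_apply, Matrix.fromBlocks_apply₁₁]
        rw [Matrix.mul_apply]
        rw [Finset.sum_congr rfl (fun k _ => by rw [hTcolL k j])]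
        rw [hrowf i (β j)]
      | inr j =>
        simp only [Matrix.submatrix_apply, Matrix.fromBlocks_apply₁₂]
        exact hScol _ _
    | inr i =>
      cases kl with
      | inl j =>
        simp only [Matrix.submatrix_apply, Matrix.fromBlocks_apply₂₁]
        rw [Matrix.mul_apply]
        rw [Finset.sum_congr rfl (fun k _ => by rw [hTcolL k j])]
        rw [hrowg i (β j), hroot j, mul_zero]
        simp
      | inr j =>
        simp only [Matrix.submatrix_apply, Matrix.fromBlocks_apply₂₂]
        exact hScol _ _
  -- blocks of T
  set V1 : Matrix (Fin m) (Fin m) ℤ := fun i j => W i j * β j ^ (m + 1) with hV1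
  set V2 : Matrix (Fin (m + 1)) (Fin m) ℤ := fun i j => T (e (Sum.inr i)) (e (Sum.inl j)) with hV2
  have hTblock : T.submatrix e e = Matrix.fromBlocks V1 0 V2 1 := by
    ext ij kl
    cases ij with
    | inl i =>
      cases kl with
      | inl j =>
        simp only [Matrix.submatrix_apply, Matrix.fromBlocks_apply₁₁]
        rw [hTcolL]
        rw [hV1]; simp only [hW]
        rw [← pow_add]
        congr 1
        rw [hvl]
        omega
      | inr j =>
        simp only [Matrix.submatrix_apply, Matrix.fromBlocks_apply₁₂]
        rw [hTcol]
        have hne : ¬ (e (Sum.inl i) = e (Sum.inr j)) := by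
          intro hcon
          have h2 : ((e (Sum.inl i)) : ℕ) = ((e (Sum.inr j)) : ℕ) := by rw [hcon]
          rw [hvl, hvr] at h2
          omega
        rw [if_neg hne]
        simp
    | inr i =>
      cases kl with
      | inl j =>
        simp only [Matrix.submatrix_apply, Matrix.fromBlocks_apply₂₁]
        rfl
      | inr j =>
        simp only [Matrix.submatrix_apply, Matrix.fromBlocks_apply₂₂]
        rw [hTcol]
        have hiff : (e (Sum.inr i) = e (Sum.inr j)) ↔ (i = j) := by
          constructor
          · intro h; exact Sum.inr_injective (e.injective h)
          · intro h; rw [h]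
        rw [Matrix.one_apply]
        by_cases h : i = j
        · rw [if_pos (hiff.mpr h), if_pos h]
        · rw [if_neg (fun hc => h (hiff.mp hc)), if_neg h]
  -- determinants
  have hdetW : W.det ≠ 0 := by
    have hWeq : W = ((vandermonde β)ᵀ).submatrix (Fin.revPerm : Equiv.Perm (Fin m)) id := by
      ext i j
      simp only [hW, Matrix.submatrix_apply, Matrix.transpose_apply, vandermonde_apply, id]
      congr 1
      show m - 1 - (i : ℕ) = ((Fin.rev i) : ℕ)
      rw [Fin.val_rev]
      omega
    rw [hWeq, Matrix.det_permute]
    apply mul_ne_zero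
    · simp
    · rw [Matrix.det_transpose]
      exact Matrix.det_vandermonde_ne_zero_iff.mpr hinj
  have hdetA : A.det = W.det * ∏ j, f.eval (β j) := by
    have h : A = W * Matrix.diagonal (fun j => f.eval (β j)) := by
      ext i j; rw [Matrix.mul_diagonal]
    rw [h, Matrix.det_mul, Matrix.det_diagonal]
  have hdetV1 : V1.det = W.det * ∏ j, β j ^ (m + 1) := by
    have h : V1 = W * Matrix.diagonal (fun j => β j ^ (m + 1)) := by
      ext i j; rw [Matrix.mul_diagonal]
    rw [h, Matrix.det_mul, Matrix.det_diagonal]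
  have hdetDm : Dm.det = g.coeff 0 ^ (m + 1) := by
    have hentry : ∀ i j : Fin (m + 1), Dm i j =
        if (j : ℕ) ≤ (i : ℕ) then g.coeff ((i : ℕ) - (j : ℕ)) else 0 := by
      intro i j
      rw [hDm]
      simp only
      rw [hSapp, if_neg (by rw [hvr]; omega), hvr, hvr]
      by_cases h : (j : ℕ) ≤ (i : ℕ)
      · rw [if_pos (by constructor <;> omega), if_pos h]
        congr 1
        omega
      · rw [if_neg (by omega), if_neg h]
    have htri : Dm.BlockTriangular OrderDual.toDual := by
      intro i j hij
      rw [hentry]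
      rw [if_neg (by
        have h2 : (i : ℕ) < (j : ℕ) := hij
        omega)]
    rw [Matrix.det_of_lowerTriangular Dm htri]
    rw [Finset.prod_congr rfl (fun i _ => by rw [hentry, if_pos le_rfl, Nat.sub_self])]
    simp
  have hdetT : T.det = W.det * ∏ j, β j ^ (m + 1) := by
    rw [← Matrix.det_submatrix_equiv_self e, hTblock, Matrix.det_fromBlocks_zero₁₂,
      Matrix.det_one, mul_one, hdetV1]
  have hdetST : S.det * T.det = A.det * Dm.det := by
    rw [← Matrix.det_mul, ← Matrix.det_submatrix_equiv_self e (S * T), hST,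
      Matrix.det_fromBlocks_zero₂₁]
  rw [hdetT, hdetA, hdetDm] at hdetST
  have hfinal : S.det * ∏ j, β j ^ (m + 1) = (∏ j, f.eval (β j)) * g.coeff 0 ^ (m + 1) := by
    apply mul_left_cancel₀ hdetW
    linear_combination hdetST
  rw [hres, ← Finset.prod_pow]
  exact hfinal

lemma aPoly_monic (q₀ q₂ q : ℕ) (m : ℤ) : (aPoly q₀ q₂ q m).Monic :=
  monic_prod_of_monic _ _ fun _ _ => monic_X_add_C _

lemma bPoly_monic (q₁ q : ℕ) (m : ℤ) : (bPoly q₁ q m).Monic :=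
  monic_prod_of_monic _ _ fun _ _ => monic_X_add_C _

lemma aPoly_natDegree (q₀ q₂ q : ℕ) (m : ℤ) : (aPoly q₀ q₂ q m).natDegree = q₀ - 1 := by
  rw [aPoly, natDegree_prod_of_monic _ _ fun _ _ => monic_X_add_C _]
  rw [Finset.sum_congr rfl fun i _ => natDegree_X_add_C _]
  simp

lemma bPoly_natDegree (q₁ q : ℕ) (m : ℤ) : (bPoly q₁ q m).natDegree = q₁ - 1 := by
  rw [bPoly, natDegree_prod_of_monic _ _ fun _ _ => monic_X_add_C _]
  rw [Finset.sum_congr rfl fun i _ => natDegree_X_add_C _]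
  simp

lemma GPoly_natDegree (q₀ q₁ q₂ q : ℕ) (m : ℤ) (hq : 0 < q) :
    (GPoly q₀ q₁ q₂ q m).natDegree = (q₀ - 1) + (q₁ - 1) := by
  have hq' : ((q : ℤ)) ≠ 0 := by exact_mod_cast hq.ne'
  rw [GPoly, mul_assoc, natDegree_C_mul hq',
    natDegree_mul (aPoly_monic q₀ q₂ q m).ne_zero (bPoly_monic q₁ q m).ne_zero,
    aPoly_natDegree, bPoly_natDegree]

lemma GPoly_leadingCoeff (q₀ q₁ q₂ q : ℕ) (m : ℤ) :
    (GPoly q₀ q₁ q₂ q m).leadingCoeff = (q : ℤ) := by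
  rw [GPoly, mul_assoc, leadingCoeff_mul, leadingCoeff_mul, leadingCoeff_C,
    (aPoly_monic q₀ q₂ q m).leadingCoeff, (bPoly_monic q₁ q m).leadingCoeff]
  ring

lemma GPoly_eval (q₀ q₁ q₂ q : ℕ) (m : ℤ) (x : ℤ) :
    (GPoly q₀ q₁ q₂ q m).eval x =
      (q : ℤ) * (∏ i ∈ Finset.Icc 1 (q₀ - 1), (x + (i : ℤ) * q₂ * m * (Nat.factorial (q - 1) : ℤ)))
        * ∏ j ∈ Finset.Icc 1 (q₁ - 1), (x + (j : ℤ) * m * (Nat.factorial (q - 1) : ℤ)) := by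
  simp [GPoly, aPoly, bPoly, eval_prod]

lemma F0_derivative (q₀ q₁ q₂ q : ℕ) (m : ℤ) :
    (F0 q₀ q₁ q₂ q m).derivative = (GPoly q₀ q₁ q₂ q m).map (Int.castRingHom ℚ) := by
  rw [F0, derivative_sum]
  have h1 : ∀ k ∈ Finset.range ((GPoly q₀ q₁ q₂ q m).natDegree + 1),
      derivative (C (((GPoly q₀ q₁ q₂ q m).coeff k : ℚ) / (k + 1)) * X ^ (k + 1)) =
        C (((GPoly q₀ q₁ q₂ q m).coeff k : ℚ)) * X ^ k := by
    intro k _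
    rw [derivative_C_mul_X_pow]
    congr 1
    · congr 1
      rw [show (((k + 1 : ℕ) : ℚ)) = ((k : ℚ) + 1) by push_cast; ring]
      field_simp
  rw [Finset.sum_congr rfl h1]
  conv_rhs => rw [((GPoly q₀ q₁ q₂ q m).map (Int.castRingHom ℚ)).as_sum_range_C_mul_X_pow]
  rw [natDegree_map_eq_of_injective (f := Int.castRingHom ℚ)
    (fun a b h => by simpa using h)]
  refine Finset.sum_congr rfl (fun k _ => ?_)
  rw [coeff_map]
  norm_num

/-- The absolute value of the discriminant of `F = F₀ + q·m·p^d` equals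
`q^q · m^{q-1} · |∏ᵢ (q·p^d + Cᵢ) · ∏ⱼ (q·p^d + Dⱼ)|`. -/
theorem abs_disc_F (q₀ q₁ q₂ q : ℕ) (m : ℤ)
    (hq₀ : Nat.Prime q₀) (hq₁ : Nat.Prime q₁) (hlt : q₀ < q₁)
    (hq : Nat.Prime q) (hq3 : 3 ≤ q) (hqeq : q = q₀ + q₁ - 1)
    (hm : 1 ≤ m) (hmsf : Squarefree m) (hqm : ¬ (q : ℤ) ∣ m)
    (hq₂ : Nat.Prime q₂) (hcong : (q₂ : ℤ) ≡ -1 [ZMOD (q : ℤ)])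
    (p d : ℕ) (hp : Nat.Prime p) (hpq : p ≠ q) (hd : 1 ≤ d)
    (Fz : Polynomial ℤ)
    (hFz : Fz.map (Int.castRingHom ℚ) =
      F0 q₀ q₁ q₂ q m + C (((q : ℤ) * m * (p : ℤ) ^ d : ℤ) : ℚ))
    (Cf Df : ℕ → ℤ)
    (hC : ∀ i ∈ Finset.Icc 1 (q₀ - 1),
      (Cf i : ℚ) * (m : ℚ) =
        (F0 q₀ q₁ q₂ q m).eval ((-((i : ℤ) * q₂ * m * (Nat.factorial (q - 1) : ℤ)) : ℤ) : ℚ))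
    (hD : ∀ j ∈ Finset.Icc 1 (q₁ - 1),
      (Df j : ℚ) * (m : ℚ) =
        (F0 q₀ q₁ q₂ q m).eval ((-((j : ℤ) * m * (Nat.factorial (q - 1) : ℤ)) : ℤ) : ℚ)) :
    |discMonic Fz| =
      (q : ℤ) ^ q * m ^ (q - 1) *
        |(∏ i ∈ Finset.Icc 1 (q₀ - 1), ((q : ℤ) * (p : ℤ) ^ d + Cf i)) *
          ∏ j ∈ Finset.Icc 1 (q₁ - 1), ((q : ℤ) * (p : ℤ) ^ d + Df j)| := by
  have hq0two := hq₀.two_le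
  have hq1two := hq₁.two_le
  have hqpos : 0 < q := by omega
  set fact : ℤ := (Nat.factorial (q - 1) : ℤ) with hfactdef
  have hfactpos : 0 < fact := by
    rw [hfactdef]; exact_mod_cast Nat.factorial_pos _
  have hmpos : (0 : ℤ) < m := hm
  have hq2pos : (0 : ℤ) < (q₂ : ℤ) := by exact_mod_cast hq₂.pos
  have hq2ge : (q₁ : ℤ) ≤ (q₂ : ℤ) := by
    have hdvd : (q : ℤ) ∣ (-1 - q₂) := Int.ModEq.dvd hcong
    have hdvd2 : (q : ℤ) ∣ ((q₂ : ℤ) + 1) := by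
      have h2 := dvd_neg.mpr hdvd
      have h3 : -(-1 - (q₂ : ℤ)) = (q₂ : ℤ) + 1 := by ring
      rwa [h3] at h2
    have hle : (q : ℤ) ≤ (q₂ : ℤ) + 1 := Int.le_of_dvd (by positivity) hdvd2
    omega
  set M : ℕ := (q₀ - 1) + (q₁ - 1) with hM
  have hMq : M + 1 = q := by omega
  -- basic GPoly facts
  have hGdeg : (GPoly q₀ q₁ q₂ q m).natDegree = M := by
    rw [GPoly_natDegree q₀ q₁ q₂ q m hqpos]
  have hdGq1 : (GPoly q₀ q₁ q₂ q m).natDegree = q - 1 := by rw [hGdeg]; omega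
  have hGtop : (GPoly q₀ q₁ q₂ q m).coeff (q - 1) = (q : ℤ) := by
    rw [show q - 1 = (GPoly q₀ q₁ q₂ q m).natDegree from hdGq1.symm, coeff_natDegree,
      GPoly_leadingCoeff]
  -- F0 facts
  have hF0q : (F0 q₀ q₁ q₂ q m).coeff q = 1 := by
    rw [F0, finset_sum_coeff]
    rw [Finset.sum_eq_single_of_mem (q - 1)
      (by simp only [Finset.mem_range]; rw [hdGq1]; omega)]
    · rw [coeff_C_mul, coeff_X_pow, if_pos (by omega : q = q - 1 + 1), mul_one, hGtop]
      rw [show ((q - 1 : ℕ) : ℚ) + 1 = (q : ℚ) by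
        push_cast [Nat.cast_sub (by omega : 1 ≤ q)]; ring]
      exact div_self (by exact_mod_cast hqpos.ne')
    · intro b _ hb
      rw [coeff_C_mul, coeff_X_pow, if_neg (by omega), mul_zero]
  have hF0degle : (F0 q₀ q₁ q₂ q m).natDegree ≤ q := by
    rw [F0]
    apply natDegree_sum_le_of_forall_le
    intro k hk
    refine le_trans (natDegree_C_mul_le _ _) ?_
    rw [natDegree_X_pow]
    simp only [Finset.mem_range] at hk
    rw [hdGq1] at hk
    omega
  have φinj : Function.Injective (Int.castRingHom ℚ) := fun a b h => by simpa using h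
  have hPq : (Fz.map (Int.castRingHom ℚ)).coeff q = 1 := by
    rw [hFz, coeff_add, coeff_C, if_neg (by omega), add_zero, hF0q]
  have hPdegle : (Fz.map (Int.castRingHom ℚ)).natDegree ≤ q := by
    rw [hFz]
    refine le_trans (natDegree_add_le _ _) ?_
    exact max_le hF0degle (by rw [natDegree_C]; exact Nat.zero_le q)
  have hmapdeg : (Fz.map (Int.castRingHom ℚ)).natDegree = Fz.natDegree :=
    natDegree_map_eq_of_injective φinj Fz
  have hFzdeg : Fz.natDegree = q := by
    rw [← hmapdeg]
    refine le_antisymm hPdegle (le_natDegree_of_ne_zero ?_)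
    rw [hPq]; exact one_ne_zero
  have hFzmonic : Fz.Monic := by
    refine (φinj.monic_map_iff).mpr ?_
    rw [Monic, Polynomial.leadingCoeff, hmapdeg, hFzdeg, hPq]
  have hder : Fz.derivative = GPoly q₀ q₁ q₂ q m := by
    apply Polynomial.map_injective _ φinj
    rw [← derivative_map, hFz, derivative_add, derivative_C, add_zero, F0_derivative]
  -- roots
  set bval : ℕ → ℤ := fun k =>
    if k < q₀ - 1 then -(((k + 1 : ℕ) : ℤ) * q₂ * m * fact)
    else -(((k - (q₀ - 1) + 1 : ℕ) : ℤ) * m * fact) with hbval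
  set β : Fin M → ℤ := fun k => bval (k : ℕ) with hβ
  have hsplit : ∀ F : ℤ → ℤ, (∏ k : Fin M, F (β k)) =
      (∏ i ∈ Finset.Icc 1 (q₀ - 1), F (-((i : ℤ) * q₂ * m * fact))) *
        ∏ j ∈ Finset.Icc 1 (q₁ - 1), F (-((j : ℤ) * m * fact)) := by
    intro F
    have h0 : (∏ k : Fin M, F (β k)) = ∏ k ∈ Finset.range M, F (bval k) :=
      Fin.prod_univ_eq_prod_range (fun k => F (bval k)) M
    rw [h0, hM, Finset.prod_range_add]
    congr 1
    · refine Finset.prod_nbij' (fun k => k + 1) (fun k => k - 1) ?_ ?_ ?_ ?_ ?_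
      · intro a ha; simp only [Finset.mem_range] at ha; simp only [Finset.mem_Icc]; omega
      · intro a ha; simp only [Finset.mem_Icc] at ha; simp only [Finset.mem_range]; omega
      · intro a _; show a + 1 - 1 = a; omega
      · intro a ha; simp only [Finset.mem_Icc] at ha; show a - 1 + 1 = a; omega
      · intro a ha; simp only [Finset.mem_range] at ha
        congr 1
        simp only [hbval]
        rw [if_pos ha]
    · refine Finset.prod_nbij' (fun k => k + 1) (fun k => k - 1) ?_ ?_ ?_ ?_ ?_
      · intro a ha; simp only [Finset.mem_range] at ha; simp only [Finset.mem_Icc]; omega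
      · intro a ha; simp only [Finset.mem_Icc] at ha; simp only [Finset.mem_range]; omega
      · intro a _; show a + 1 - 1 = a; omega
      · intro a ha; simp only [Finset.mem_Icc] at ha; show a - 1 + 1 = a; omega
      · intro a ha; simp only [Finset.mem_range] at ha
        congr 1
        simp only [hbval]
        rw [if_neg (by omega)]
        have hidx : q₀ - 1 + a - (q₀ - 1) + 1 = a + 1 := by omega
        rw [hidx]
  have hroot : ∀ k : Fin M, (GPoly q₀ q₁ q₂ q m).eval (β k) = 0 := by
    intro k
    rw [GPoly_eval]
    rcases lt_or_ge ((k : Fin M) : ℕ) (q₀ - 1) with h | h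
    · have hmem : ((k : ℕ) + 1) ∈ Finset.Icc 1 (q₀ - 1) := by
        simp only [Finset.mem_Icc]; omega
      have hzero : β k + (((k : ℕ) + 1 : ℕ) : ℤ) * q₂ * m * fact = 0 := by
        simp only [hβ, hbval]
        rw [if_pos h]
        ring
      rw [Finset.prod_eq_zero hmem hzero]
      ring
    · have hmem : ((k : ℕ) - (q₀ - 1) + 1) ∈ Finset.Icc 1 (q₁ - 1) := by
        simp only [Finset.mem_Icc]
        have := k.isLt
        omega
      have hzero : β k + (((k : ℕ) - (q₀ - 1) + 1 : ℕ) : ℤ) * m * fact = 0 := by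
        simp only [hβ, hbval]
        rw [if_neg (by omega)]
        ring
      rw [Finset.prod_eq_zero hmem hzero]
      ring
  -- injectivity
  have hcancel : ∀ x y : ℤ, x * m * fact = y * m * fact → x = y := by
    intro x y h
    have h1 := mul_right_cancel₀ hfactpos.ne' h
    exact mul_right_cancel₀ hmpos.ne' h1
  have hβinj : Function.Injective β := by
    intro a b hab
    simp only [hβ] at hab
    apply Fin.ext
    have hbM := b.isLt
    have haM := a.isLt
    by_cases ha : (a : ℕ) < q₀ - 1 <;> by_cases hb : (b : ℕ) < q₀ - 1 <;>
      simp only [hbval, ha, hb, if_true, if_false, neg_inj, if_pos, if_neg] at hab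
    · have h2 : (((a : ℕ) + 1 : ℕ) : ℤ) * (q₂ : ℤ) = (((b : ℕ) + 1 : ℕ) : ℤ) * q₂ :=
        hcancel _ _ hab
      have h3 := mul_right_cancel₀ hq2pos.ne' h2
      omega
    · exfalso
      have h2 : (((a : ℕ) + 1 : ℕ) : ℤ) * (q₂ : ℤ) = (((b : ℕ) - (q₀ - 1) + 1 : ℕ) : ℤ) :=
        hcancel _ _ hab
      have hL : (q₂ : ℤ) ≤ (((a : ℕ) + 1 : ℕ) : ℤ) * q₂ :=
        le_mul_of_one_le_left hq2pos.le (by exact_mod_cast Nat.one_le_iff_ne_zero.mpr (by omega))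
      have hR : (((b : ℕ) - (q₀ - 1) + 1 : ℕ) : ℤ) < (q₁ : ℤ) := by
        exact_mod_cast (by omega : (b : ℕ) - (q₀ - 1) + 1 < q₁)
      linarith
    · exfalso
      have h2 : (((b : ℕ) + 1 : ℕ) : ℤ) * (q₂ : ℤ) = (((a : ℕ) - (q₀ - 1) + 1 : ℕ) : ℤ) :=
        hcancel _ _ hab.symm
      have hL : (q₂ : ℤ) ≤ (((b : ℕ) + 1 : ℕ) : ℤ) * q₂ :=
        le_mul_of_one_le_left hq2pos.le (by exact_mod_cast Nat.one_le_iff_ne_zero.mpr (by omega))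
      have hR : (((a : ℕ) - (q₀ - 1) + 1 : ℕ) : ℤ) < (q₁ : ℤ) := by
        exact_mod_cast (by omega : (a : ℕ) - (q₀ - 1) + 1 < q₁)
      linarith
    · have h2 := hcancel _ _ hab
      omega
  -- evaluations of Fz at the roots
  have hφ : ∀ x : ℤ, ((Fz.eval x : ℤ) : ℚ) = (Fz.map (Int.castRingHom ℚ)).eval ((x : ℤ) : ℚ) := by
    intro x
    rw [eval_map, show ((x : ℤ) : ℚ) = (Int.castRingHom ℚ) x from rfl, eval₂_at_apply]
    rfl
  have hevalC : ∀ i ∈ Finset.Icc 1 (q₀ - 1),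
      Fz.eval (-((i : ℤ) * q₂ * m * fact)) = m * ((q : ℤ) * (p : ℤ) ^ d + Cf i) := by
    intro i hi
    have h1 : ((Fz.eval (-((i : ℤ) * q₂ * m * fact)) : ℤ) : ℚ)
        = ((m * ((q : ℤ) * (p : ℤ) ^ d + Cf i) : ℤ) : ℚ) := by
      rw [hφ, hFz, eval_add, eval_C, ← hC i hi]
      push_cast
      ring
    exact_mod_cast h1
  have hevalD : ∀ j ∈ Finset.Icc 1 (q₁ - 1),
      Fz.eval (-((j : ℤ) * m * fact)) = m * ((q : ℤ) * (p : ℤ) ^ d + Df j) := by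
    intro j hj
    have h1 : ((Fz.eval (-((j : ℤ) * m * fact)) : ℤ) : ℚ)
        = ((m * ((q : ℤ) * (p : ℤ) ^ d + Df j) : ℤ) : ℚ) := by
      rw [hφ, hFz, eval_add, eval_C, ← hD j hj]
      push_cast
      ring
    exact_mod_cast h1
  -- products
  set PC : ℤ := ∏ i ∈ Finset.Icc 1 (q₀ - 1), ((i : ℤ) * q₂ * m * fact) with hPC
  set PD : ℤ := ∏ j ∈ Finset.Icc 1 (q₁ - 1), ((j : ℤ) * m * fact) with hPD
  have hPCpos : 0 < PC := by
    rw [hPC]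
    apply Finset.prod_pos
    intro i hi
    simp only [Finset.mem_Icc] at hi
    have : (0 : ℤ) < (i : ℤ) := by exact_mod_cast (by omega : 0 < i)
    positivity
  have hPDpos : 0 < PD := by
    rw [hPD]
    apply Finset.prod_pos
    intro i hi
    simp only [Finset.mem_Icc] at hi
    have : (0 : ℤ) < (i : ℤ) := by exact_mod_cast (by omega : 0 < i)
    positivity
  have hG0 : (GPoly q₀ q₁ q₂ q m).coeff 0 = (q : ℤ) * (PC * PD) := by
    rw [coeff_zero_eq_eval_zero, GPoly_eval]
    simp only [zero_add]
    rw [hPC, hPD]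
    ring
  have hprodnegβ : (∏ k : Fin M, -(β k)) = PC * PD := by
    have h2 := hsplit (fun v => -v)
    simp only [neg_neg] at h2
    rw [h2, hPC, hPD]
  have hprodβ : (∏ k : Fin M, β k) = PC * PD := by
    have h3 : (∏ k : Fin M, β k) = ∏ k : Fin M, ((-1 : ℤ) * (-(β k))) := by
      refine Finset.prod_congr rfl (fun k _ => by ring)
    rw [h3, Finset.prod_mul_distrib, Finset.prod_const, hprodnegβ, Finset.card_univ,
      Fintype.card_fin]
    have hqodd : Odd q := hq.odd_of_ne_two (by omega)
    have hMeven : Even M := by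
      have : M = q - 1 := by omega
      rw [this]
      exact Nat.Odd.sub_odd hqodd odd_one
    rw [hMeven.neg_one_pow, one_mul]
  -- apply the key resultant identity
  have hkey := key_resultant Fz (GPoly q₀ q₁ q₂ q m) M hGdeg (by rw [hFzdeg]; omega)
    β hβinj hroot
  rw [hprodβ, hG0, hMq] at hkey
  have hFprod : (∏ j : Fin M, Fz.eval (β j)) =
      m ^ (q - 1) * ((∏ i ∈ Finset.Icc 1 (q₀ - 1), ((q : ℤ) * (p : ℤ) ^ d + Cf i)) *
        ∏ j ∈ Finset.Icc 1 (q₁ - 1), ((q : ℤ) * (p : ℤ) ^ d + Df j)) := by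
    have h4 := hsplit (fun v => Fz.eval v)
    rw [h4, Finset.prod_congr rfl hevalC, Finset.prod_congr rfl hevalD,
      Finset.prod_mul_distrib, Finset.prod_mul_distrib, Finset.prod_const, Finset.prod_const,
      Nat.card_Icc, Nat.card_Icc]
    have hcard0 : q₀ - 1 + 1 - 1 = q₀ - 1 := by omega
    have hcard1 : q₁ - 1 + 1 - 1 = q₁ - 1 := by omega
    rw [hcard0, hcard1]
    have hpow : m ^ (q₀ - 1) * m ^ (q₁ - 1) = m ^ (q - 1) := by
      rw [← pow_add]; congr 1; omega
    calc m ^ (q₀ - 1) * (∏ i ∈ Finset.Icc 1 (q₀ - 1), ((q : ℤ) * (p : ℤ) ^ d + Cf i)) *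
          (m ^ (q₁ - 1) * ∏ j ∈ Finset.Icc 1 (q₁ - 1), ((q : ℤ) * (p : ℤ) ^ d + Df j))
        = (m ^ (q₀ - 1) * m ^ (q₁ - 1)) * ((∏ i ∈ Finset.Icc 1 (q₀ - 1),
            ((q : ℤ) * (p : ℤ) ^ d + Cf i)) *
            ∏ j ∈ Finset.Icc 1 (q₁ - 1), ((q : ℤ) * (p : ℤ) ^ d + Df j)) := by ring
      _ = _ := by rw [hpow]
  rw [hFprod] at hkey
  have hres : _root_.resultant Fz (GPoly q₀ q₁ q₂ q m) =
      (q : ℤ) ^ q * m ^ (q - 1) * ((∏ i ∈ Finset.Icc 1 (q₀ - 1), ((q : ℤ) * (p : ℤ) ^ d + Cf i)) *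
        ∏ j ∈ Finset.Icc 1 (q₁ - 1), ((q : ℤ) * (p : ℤ) ^ d + Df j)) := by
    apply mul_right_cancel₀ (pow_ne_zero q (mul_pos hPCpos hPDpos).ne')
    rw [hkey, mul_pow]
    ring
  rw [discMonic, hder, hres, abs_mul, abs_mul, abs_pow, abs_neg, abs_one, one_pow, one_mul]
  congr 1
  rw [abs_of_nonneg]
  exact mul_nonneg (by positivity) (pow_nonneg (by linarith) _)
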